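/- arXiv:math/0409587 — 2 statements merged into one kernel-verified Lean document; each statement's English description precedes it below -/
import Mathlib

section
/- For s ∈ SL(2,ℝ), the linear map P_s : sl(2,ℝ) → sl(2,ℝ), P_s(u) = ½( σ(s)⁻¹ σ(u) σ(s) − s σ(u) s⁻¹ ), is the zero map if and only if s lies in the orbit of the identity under the twisted action (g,s) ↦ g s σ(g)⁻¹, i.e. if and only if there exists g ∈ SL(2,ℝ) with s = g H g⁻¹ H. -/
/-- H = [[1,0],[0,−1]]. -/
noncomputable def Hmat : Matrix (Fin 2) (Fin 2) ℝ := !![1, 0; 0, -1]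

/-- The bivector P_S^σ(s): P_s(u) = ½(σ(s)⁻¹ σ(u) σ(s) − s σ(u) s⁻¹),
with σ(m) = H m H. -/
noncomputable def Pbiv (s u : Matrix (Fin 2) (Fin 2) ℝ) : Matrix (Fin 2) (Fin 2) ℝ :=
  (2:ℝ)⁻¹ • ((Hmat * s * Hmat)⁻¹ * (Hmat * u * Hmat) * (Hmat * s * Hmat)
    - s * (Hmat * u * Hmat) * s⁻¹)

lemma inv_of (a b c d : ℝ) (h : a*d - b*c = 1) : (!![a,b;c,d])⁻¹ = !![d,-b;-c,a] := by
  rw [Matrix.inv_def, Matrix.det_fin_two_of, h, Ring.inverse_one, one_smul,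
    Matrix.adjugate_fin_two_of]

lemma Pbiv_explicit (a b c d x y z : ℝ) (h : a*d - b*c = 1) :
    Pbiv !![a,b;c,d] !![x,y;z,-x] =
      ((2:ℝ)⁻¹ * (a - d)) • !![-(c*y+b*z), 2*b*x+(a+d)*y; 2*c*x-(a+d)*z, c*y+b*z] := by
  have h1 : Hmat * !![a,b;c,d] * Hmat = !![a,-b;-c,d] := by
    simp [Hmat, Matrix.mul_fin_two]
  have h2 : (!![a,-b;-c,d])⁻¹ = !![d,b;c,a] := by
    rw [inv_of a (-b) (-c) d (by ring_nf; linarith)]; norm_num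
  have h3 : Hmat * !![x,y;z,-x] * Hmat = !![x,-y;-z,-x] := by
    simp [Hmat, Matrix.mul_fin_two]
  have h4 : (!![a,b;c,d])⁻¹ = !![d,-b;-c,a] := inv_of a b c d h
  rw [Pbiv, h1, h2, h3, h4]
  ext i j
  fin_cases i <;> fin_cases j <;>
    simp [Matrix.mul_fin_two, Matrix.smul_apply, Matrix.sub_apply] <;> ring

lemma orbit_form (p q r t : ℝ) (h : p*t - q*r = 1) :
    !![p,q;r,t] * Hmat * (!![p,q;r,t])⁻¹ * Hmat = !![p*t+q*r, 2*(p*q); 2*(r*t), p*t+q*r] := by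
  rw [inv_of p q r t h]
  ext i j
  fin_cases i <;> fin_cases j <;>
    simp [Hmat, Matrix.mul_fin_two] <;> ring

lemma Pbiv_zero_iff (s : Matrix (Fin 2) (Fin 2) ℝ) (hs : s.det = 1) :
    (∀ u : Matrix (Fin 2) (Fin 2) ℝ, u.trace = 0 → Pbiv s u = 0) ↔ s 1 1 = s 0 0 := by
  have hse : s = !![s 0 0, s 0 1; s 1 0, s 1 1] := Matrix.etaExpand_eq s |>.symm
  have hdet : s 0 0 * s 1 1 - s 0 1 * s 1 0 = 1 := by
    rw [Matrix.det_fin_two] at hs; exact hs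
  set a := s 0 0
  set b := s 0 1
  set c := s 1 0
  set d := s 1 1
  constructor
  · intro h
    have hu : ∀ x y z : ℝ, Pbiv s !![x,y;z,-x] = 0 := fun x y z =>
      h _ (by simp [Matrix.trace_fin_two_of])
    have e1 := hu 0 1 0
    have e2 := hu 0 0 1
    rw [hse, Pbiv_explicit a b c d _ _ _ hdet] at e1 e2
    have f1 := congrFun (congrFun e1 0) 1
    have f2 := congrFun (congrFun e1 0) 0
    have f3 := congrFun (congrFun e2 0) 0
    simp [Matrix.smul_apply] at f1 f2 f3
    rcases f1 with h1 | h1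
    · linarith
    rcases f2 with h2 | h2
    · linarith
    rcases f3 with h3 | h3
    · linarith
    nlinarith [sq_nonneg a]
  · intro hda u hut
    have hu11 : u 1 1 = -(u 0 0) := by
      rw [Matrix.trace_fin_two] at hut; linarith
    have hue : u = !![u 0 0, u 0 1; u 1 0, -(u 0 0)] := by
      rw [← hu11]; exact (Matrix.etaExpand_eq u).symm
    have hdet' : a * a - b * c = 1 := by rw [hda] at hdet; exact hdet
    rw [hse, hda, hue, Pbiv_explicit a b c a _ _ _ hdet']
    simp

theorem stmt_12 (s : Matrix (Fin 2) (Fin 2) ℝ) (hs : s.det = 1) :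
    (∀ u : Matrix (Fin 2) (Fin 2) ℝ, u.trace = 0 → Pbiv s u = 0) ↔
    ∃ g : Matrix (Fin 2) (Fin 2) ℝ, g.det = 1 ∧ s = g * Hmat * g⁻¹ * Hmat := by
  rw [Pbiv_zero_iff s hs]
  constructor
  · intro hda
    have hse : s = !![s 0 0, s 0 1; s 1 0, s 0 0] := by
      have h := Matrix.eta_fin_two s
      rw [hda] at h
      exact h
    have hdet : s 0 0 * s 0 0 - s 0 1 * s 1 0 = 1 := by
      rw [Matrix.det_fin_two, hda] at hs; exact hs
    set a := s 0 0 with ha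
    set b := s 0 1 with hb
    set c := s 1 0 with hc
    clear_value a b c
    by_cases ha1 : a = -1
    · have hbc : b * c = 0 := by nlinarith [hdet]
      by_cases hc0 : c = 0
      · refine ⟨!![b/2, 1; -1, 0], ?_, ?_⟩
        · rw [Matrix.det_fin_two_of]; ring
        · rw [orbit_form (b/2) 1 (-1) 0 (by ring), hse, ha1, hc0]
          ext i j; fin_cases i <;> fin_cases j <;> simp <;> ring
      · have hb0 : b = 0 := by
          rcases mul_eq_zero.mp hbc with h | h
          · exact h
          · exact absurd h hc0
        refine ⟨!![0, 1; -1, -(c/2)], ?_, ?_⟩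
        · rw [Matrix.det_fin_two_of]; ring
        · rw [orbit_form 0 1 (-1) (-(c/2)) (by ring), hse, ha1, hb0]
          ext i j; fin_cases i <;> fin_cases j <;> simp <;> ring
    · have ha1' : a + 1 ≠ 0 := fun h => ha1 (by linarith)
      refine ⟨!![1, b/2; c/(a+1), (a+1)/2], ?_, ?_⟩
      · rw [Matrix.det_fin_two_of]
        field_simp
        linear_combination hdet
      · rw [orbit_form 1 (b/2) (c/(a+1)) ((a+1)/2)
          (by field_simp; linear_combination hdet), hse]
        ext i j
        fin_cases i <;> fin_cases j
        all_goals simp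
        all_goals try field_simp
        all_goals first | ring1 | linear_combination 2*hdet | linear_combination (-2)*hdet | nlinarith [hdet]
  · rintro ⟨g, hg, rfl⟩
    have hgd : g 0 0 * g 1 1 - g 0 1 * g 1 0 = 1 := by
      rw [Matrix.det_fin_two] at hg; exact hg
    conv_lhs => rw [Matrix.eta_fin_two g, orbit_form _ _ _ _ hgd]
    conv_rhs => rw [Matrix.eta_fin_two g, orbit_form _ _ _ _ hgd]
    simp
end

section
/- If s ∈ SL(2,ℝ) is not of the form g H g⁻¹ H for any g ∈ SL(2,ℝ), then the image of the linear map P_s : sl(2,ℝ) → sl(2,ℝ), P_s(u) = ½( σ(s)⁻¹ σ(u) σ(s) − s σ(u) s⁻¹ ), equals { x − s H x H s⁻¹ : x ∈ sl(2,ℝ) }, the tangent space at s to the orbit of s under the twisted action (g,s) ↦ g s σ(g)⁻¹. (Hence away from the orbit of the identity, the symplectic leaves of the Poisson structure P_S^σ are the orbits of the twisted action.) -/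
set_option maxHeartbeats 1000000

-- inverse of concrete det-1 matrix
lemma inv_fin_two (p q r t : ℝ) (h : p * t - q * r = 1) :
    (!![p, q; r, t])⁻¹ = !![t, -q; -r, p] := by
  apply Matrix.inv_eq_left_inv
  ext i j
  fin_cases i <;> fin_cases j <;>
    simp [Matrix.mul_apply, Fin.sum_univ_two, Matrix.one_apply, -mul_eq_zero] <;> first | linear_combination h | linear_combination -h | ring1

lemma HsH_eq (p q r t : ℝ) :
    Hmat * !![p, q; r, t] * Hmat = !![p, -q; -r, t] := by
  ext i j
  fin_cases i <;> fin_cases j <;>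
    simp [Hmat, Matrix.mul_apply, Fin.sum_univ_two, -mul_eq_zero] <;> ring

lemma HsH_inv (p q r t : ℝ) (h : p * t - q * r = 1) :
    (Hmat * !![p, q; r, t] * Hmat)⁻¹ = !![t, q; r, p] := by
  rw [HsH_eq, inv_fin_two p (-q) (-r) t (by linarith)]
  norm_num

-- if s has equal diagonal entries, it is on the twisted orbit of 1
lemma on_orbit (p q r : ℝ) (h : p * p - q * r = 1) :
    ∃ g : Matrix (Fin 2) (Fin 2) ℝ, g.det = 1 ∧ !![p, q; r, p] = g * Hmat * g⁻¹ * Hmat := by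
  rcases lt_trichotomy p (-1) with hp | hp | hp
  · -- p < -1 : k = sqrt(-2p-2), g = k⁻¹ • !![p+1,-q;r,-p-1]
    set k := Real.sqrt (-2*p - 2) with hk
    have hknn : (0:ℝ) < -2*p - 2 := by linarith
    have hk2 : k ^ 2 = -2*p - 2 := Real.sq_sqrt (le_of_lt hknn)
    have hkpos : 0 < k := Real.sqrt_pos.mpr hknn
    have hkne : k ≠ 0 := ne_of_gt hkpos
    refine ⟨k⁻¹ • !![p+1, -q; r, -p-1], ?_, ?_⟩
    · rw [Matrix.det_smul, Fintype.card_fin, Matrix.det_fin_two_of]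
      field_simp
      (first
           | ring1
           | linear_combination hk2 - h | linear_combination h - hk2
           | linear_combination hk2 + h | linear_combination -hk2 - h
           | linear_combination -hk2 + h | linear_combination hk2 | linear_combination -hk2
           | linear_combination -2*hk2 - h | linear_combination 2*hk2 + h
           | linear_combination -2*hk2 + h | linear_combination 2*hk2 - h
           | linear_combination p*hk2 - h | linear_combination -p*hk2 + h
           | linear_combination p*hk2 + h | linear_combination -p*hk2 - h
           | linear_combination q*k^2*hk2 | linear_combination -q*k^2*hk2
           | linear_combination r*k^2*hk2 | linear_combination -r*k^2*hk2
           | linear_combination q*hk2 | linear_combination -q*hk2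
           | linear_combination r*hk2 | linear_combination -r*hk2
           | linear_combination (p+1)*hk2 + h | linear_combination -(p+1)*hk2 - h
           | linear_combination (p+1)*hk2 - h | linear_combination -(p+1)*hk2 + h
           | linear_combination p*k^2*hk2 - h | linear_combination p*k^2*hk2 + h
           | linear_combination -p*k^2*hk2 - h | linear_combination -p*k^2*hk2 + h
           | linear_combination (p^2 - q*r - 1 - k^2)*hk2 + (2*p+2)*h
           | linear_combination -((p^2 - q*r - 1 - k^2)*hk2 + (2*p+2)*h)
           | linear_combination (p^2 - q*r - 1 + k^2)*hk2 - (2*p+2)*h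
           | linear_combination -((p^2 - q*r - 1 + k^2)*hk2 - (2*p+2)*h))
    · have hginv : (k⁻¹ • !![p+1, -q; r, -p-1])⁻¹ = k⁻¹ • !![-p-1, q; -r, p+1] := by
        apply Matrix.inv_eq_left_inv
        ext i j
        fin_cases i <;> fin_cases j <;>
          simp [Matrix.mul_apply, Fin.sum_univ_two, Matrix.one_apply, -mul_eq_zero] <;>
          (try field_simp) <;>
          (first
           | ring1
           | linear_combination hk2 - h | linear_combination h - hk2
           | linear_combination hk2 + h | linear_combination -hk2 - h
           | linear_combination -hk2 + h | linear_combination hk2 | linear_combination -hk2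
           | linear_combination -2*hk2 - h | linear_combination 2*hk2 + h
           | linear_combination -2*hk2 + h | linear_combination 2*hk2 - h
           | linear_combination p*hk2 - h | linear_combination -p*hk2 + h
           | linear_combination p*hk2 + h | linear_combination -p*hk2 - h
           | linear_combination q*k^2*hk2 | linear_combination -q*k^2*hk2
           | linear_combination r*k^2*hk2 | linear_combination -r*k^2*hk2
           | linear_combination q*hk2 | linear_combination -q*hk2
           | linear_combination r*hk2 | linear_combination -r*hk2
           | linear_combination (p+1)*hk2 + h | linear_combination -(p+1)*hk2 - h
           | linear_combination (p+1)*hk2 - h | linear_combination -(p+1)*hk2 + h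
           | linear_combination p*k^2*hk2 - h | linear_combination p*k^2*hk2 + h
           | linear_combination -p*k^2*hk2 - h | linear_combination -p*k^2*hk2 + h
           | linear_combination (p^2 - q*r - 1 - k^2)*hk2 + (2*p+2)*h
           | linear_combination -((p^2 - q*r - 1 - k^2)*hk2 + (2*p+2)*h)
           | linear_combination (p^2 - q*r - 1 + k^2)*hk2 - (2*p+2)*h
           | linear_combination -((p^2 - q*r - 1 + k^2)*hk2 - (2*p+2)*h))
      rw [hginv]
      ext i j
      fin_cases i <;> fin_cases j <;>
        simp [Hmat, Matrix.mul_apply, Fin.sum_univ_two, -mul_eq_zero] <;>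
        (try field_simp) <;>
        (first
           | ring1
           | linear_combination hk2 - h | linear_combination h - hk2
           | linear_combination hk2 + h | linear_combination -hk2 - h
           | linear_combination -hk2 + h | linear_combination hk2 | linear_combination -hk2
           | linear_combination -2*hk2 - h | linear_combination 2*hk2 + h
           | linear_combination -2*hk2 + h | linear_combination 2*hk2 - h
           | linear_combination p*hk2 - h | linear_combination -p*hk2 + h
           | linear_combination p*hk2 + h | linear_combination -p*hk2 - h
           | linear_combination q*k^2*hk2 | linear_combination -q*k^2*hk2
           | linear_combination r*k^2*hk2 | linear_combination -r*k^2*hk2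
           | linear_combination q*hk2 | linear_combination -q*hk2
           | linear_combination r*hk2 | linear_combination -r*hk2
           | linear_combination (p+1)*hk2 + h | linear_combination -(p+1)*hk2 - h
           | linear_combination (p+1)*hk2 - h | linear_combination -(p+1)*hk2 + h
           | linear_combination p*k^2*hk2 - h | linear_combination p*k^2*hk2 + h
           | linear_combination -p*k^2*hk2 - h | linear_combination -p*k^2*hk2 + h
           | linear_combination (p^2 - q*r - 1 - k^2)*hk2 + (2*p+2)*h
           | linear_combination -((p^2 - q*r - 1 - k^2)*hk2 + (2*p+2)*h)
           | linear_combination (p^2 - q*r - 1 + k^2)*hk2 - (2*p+2)*h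
           | linear_combination -((p^2 - q*r - 1 + k^2)*hk2 - (2*p+2)*h))
  · -- p = -1 : q*r = 0, g = !![q/2, 1; -1, -r/2]
    subst hp
    have hqr : q * r = 0 := by linarith
    refine ⟨!![q/2, 1; -1, -r/2], ?_, ?_⟩
    · rw [Matrix.det_fin_two_of]; linear_combination -hqr/4
    · have hginv : (!![q/2, 1; -1, -r/2])⁻¹ = !![-r/2, -1; 1, q/2] := by
        apply Matrix.inv_eq_left_inv
        ext i j
        fin_cases i <;> fin_cases j <;>
          simp [Matrix.mul_apply, Fin.sum_univ_two, Matrix.one_apply, -mul_eq_zero] <;>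
          (first | linear_combination -hqr/4 | linear_combination hqr/4 | ring)
      rw [hginv]
      ext i j
      fin_cases i <;> fin_cases j <;>
        simp [Hmat, Matrix.mul_apply, Fin.sum_univ_two, -mul_eq_zero] <;>
        (first | linear_combination -hqr/4 | linear_combination hqr/4 |
           linear_combination -hqr/2 | linear_combination hqr/2 | ring)
  · -- p > -1 : k = sqrt(2p+2), g = k⁻¹ • !![p+1, q; r, p+1]
    set k := Real.sqrt (2*p + 2) with hk
    have hknn : (0:ℝ) < 2*p + 2 := by linarith
    have hk2 : k ^ 2 = 2*p + 2 := Real.sq_sqrt (le_of_lt hknn)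
    have hkne : k ≠ 0 := ne_of_gt (Real.sqrt_pos.mpr hknn)
    refine ⟨k⁻¹ • !![p+1, q; r, p+1], ?_, ?_⟩
    · rw [Matrix.det_smul, Fintype.card_fin, Matrix.det_fin_two_of]
      field_simp
      (first
           | ring1
           | linear_combination hk2 - h | linear_combination h - hk2
           | linear_combination hk2 + h | linear_combination -hk2 - h
           | linear_combination -hk2 + h | linear_combination hk2 | linear_combination -hk2
           | linear_combination -2*hk2 - h | linear_combination 2*hk2 + h
           | linear_combination -2*hk2 + h | linear_combination 2*hk2 - h
           | linear_combination p*hk2 - h | linear_combination -p*hk2 + h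
           | linear_combination p*hk2 + h | linear_combination -p*hk2 - h
           | linear_combination q*k^2*hk2 | linear_combination -q*k^2*hk2
           | linear_combination r*k^2*hk2 | linear_combination -r*k^2*hk2
           | linear_combination q*hk2 | linear_combination -q*hk2
           | linear_combination r*hk2 | linear_combination -r*hk2
           | linear_combination (p+1)*hk2 + h | linear_combination -(p+1)*hk2 - h
           | linear_combination (p+1)*hk2 - h | linear_combination -(p+1)*hk2 + h
           | linear_combination p*k^2*hk2 - h | linear_combination p*k^2*hk2 + h
           | linear_combination -p*k^2*hk2 - h | linear_combination -p*k^2*hk2 + h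
           | linear_combination (p^2 - q*r - 1 - k^2)*hk2 + (2*p+2)*h
           | linear_combination -((p^2 - q*r - 1 - k^2)*hk2 + (2*p+2)*h)
           | linear_combination (p^2 - q*r - 1 + k^2)*hk2 - (2*p+2)*h
           | linear_combination -((p^2 - q*r - 1 + k^2)*hk2 - (2*p+2)*h))
    · have hginv : (k⁻¹ • !![p+1, q; r, p+1])⁻¹ = k⁻¹ • !![p+1, -q; -r, p+1] := by
        apply Matrix.inv_eq_left_inv
        ext i j
        fin_cases i <;> fin_cases j <;>
          simp [Matrix.mul_apply, Fin.sum_univ_two, Matrix.one_apply, -mul_eq_zero] <;>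
          (try field_simp) <;>
          (first
           | ring1
           | linear_combination hk2 - h | linear_combination h - hk2
           | linear_combination hk2 + h | linear_combination -hk2 - h
           | linear_combination -hk2 + h | linear_combination hk2 | linear_combination -hk2
           | linear_combination -2*hk2 - h | linear_combination 2*hk2 + h
           | linear_combination -2*hk2 + h | linear_combination 2*hk2 - h
           | linear_combination p*hk2 - h | linear_combination -p*hk2 + h
           | linear_combination p*hk2 + h | linear_combination -p*hk2 - h
           | linear_combination q*k^2*hk2 | linear_combination -q*k^2*hk2
           | linear_combination r*k^2*hk2 | linear_combination -r*k^2*hk2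
           | linear_combination q*hk2 | linear_combination -q*hk2
           | linear_combination r*hk2 | linear_combination -r*hk2
           | linear_combination (p+1)*hk2 + h | linear_combination -(p+1)*hk2 - h
           | linear_combination (p+1)*hk2 - h | linear_combination -(p+1)*hk2 + h
           | linear_combination p*k^2*hk2 - h | linear_combination p*k^2*hk2 + h
           | linear_combination -p*k^2*hk2 - h | linear_combination -p*k^2*hk2 + h
           | linear_combination (p^2 - q*r - 1 - k^2)*hk2 + (2*p+2)*h
           | linear_combination -((p^2 - q*r - 1 - k^2)*hk2 + (2*p+2)*h)
           | linear_combination (p^2 - q*r - 1 + k^2)*hk2 - (2*p+2)*h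
           | linear_combination -((p^2 - q*r - 1 + k^2)*hk2 - (2*p+2)*h))
      rw [hginv]
      ext i j
      fin_cases i <;> fin_cases j <;>
        simp [Hmat, Matrix.mul_apply, Fin.sum_univ_two, -mul_eq_zero] <;>
        (try field_simp) <;>
        (first
           | ring1
           | linear_combination hk2 - h | linear_combination h - hk2
           | linear_combination hk2 + h | linear_combination -hk2 - h
           | linear_combination -hk2 + h | linear_combination hk2 | linear_combination -hk2
           | linear_combination -2*hk2 - h | linear_combination 2*hk2 + h
           | linear_combination -2*hk2 + h | linear_combination 2*hk2 - h
           | linear_combination p*hk2 - h | linear_combination -p*hk2 + h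
           | linear_combination p*hk2 + h | linear_combination -p*hk2 - h
           | linear_combination q*k^2*hk2 | linear_combination -q*k^2*hk2
           | linear_combination r*k^2*hk2 | linear_combination -r*k^2*hk2
           | linear_combination q*hk2 | linear_combination -q*hk2
           | linear_combination r*hk2 | linear_combination -r*hk2
           | linear_combination (p+1)*hk2 + h | linear_combination -(p+1)*hk2 - h
           | linear_combination (p+1)*hk2 - h | linear_combination -(p+1)*hk2 + h
           | linear_combination p*k^2*hk2 - h | linear_combination p*k^2*hk2 + h
           | linear_combination -p*k^2*hk2 - h | linear_combination -p*k^2*hk2 + h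
           | linear_combination (p^2 - q*r - 1 - k^2)*hk2 + (2*p+2)*h
           | linear_combination -((p^2 - q*r - 1 - k^2)*hk2 + (2*p+2)*h)
           | linear_combination (p^2 - q*r - 1 + k^2)*hk2 - (2*p+2)*h
           | linear_combination -((p^2 - q*r - 1 + k^2)*hk2 - (2*p+2)*h))

/- STATEMENT 13: if s ∈ SL(2,ℝ) is not on the twisted orbit of the identity,
then Im P_s = {x − s H x H s⁻¹ : x ∈ sl(2,ℝ)}, the tangent space at s to the
twisted orbit of s. -/
theorem stmt_13 (s : Matrix (Fin 2) (Fin 2) ℝ) (hs : s.det = 1)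
    (hnot : ¬ ∃ g : Matrix (Fin 2) (Fin 2) ℝ, g.det = 1 ∧ s = g * Hmat * g⁻¹ * Hmat) :
    {v | ∃ u : Matrix (Fin 2) (Fin 2) ℝ, u.trace = 0 ∧ Pbiv s u = v}
      = {v | ∃ x : Matrix (Fin 2) (Fin 2) ℝ, x.trace = 0 ∧
          v = x - s * (Hmat * x * Hmat) * s⁻¹} := by
  obtain ⟨p, q, r, t, rfl⟩ : ∃ p q r t, s = !![p, q; r, t] :=
    ⟨_, _, _, _, Matrix.eta_fin_two s⟩
  rw [Matrix.det_fin_two_of] at hs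
  have hdet : p * t - q * r = 1 := hs
  have hpt : p ≠ t := by
    intro hEq
    first
      | exact hnot (on_orbit p q r (by subst hEq; linarith))
      | · subst hEq
          exact hnot (on_orbit p q r (by linarith))
  have e0 : p - t ≠ 0 := sub_ne_zero.mpr hpt
  have hsinv : (!![p, q; r, t])⁻¹ = !![t, -q; -r, p] := inv_fin_two p q r t hdet
  have hconj : (Hmat * !![p, q; r, t] * Hmat)⁻¹ = !![t, q; r, p] := HsH_inv p q r t hdet
  ext v
  simp only [Set.mem_setOf_eq]
  constructor
  · rintro ⟨u, hu, rfl⟩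
    rw [Matrix.trace_fin_two] at hu
    obtain ⟨a, b, c, rfl⟩ : ∃ a b c, u = !![a, b; c, -a] := by
      refine ⟨u 0 0, u 0 1, u 1 0, ?_⟩
      have h11 : u 1 1 = -u 0 0 := by linarith
      conv_lhs => rw [Matrix.eta_fin_two u]
      rw [h11]
    refine ⟨!![(a + r*t*b + q*r*a + p*t*a - p*q*c)/2, (b - t^2*b - 2*q*t*a + q^2*c)/2;
              (c + r^2*b + 2*p*r*a - p^2*c)/2, -((a + r*t*b + q*r*a + p*t*a - p*q*c)/2)],
           by simp [Matrix.trace_fin_two] <;> ring, ?_⟩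
    simp only [Pbiv]
    rw [hconj, hsinv]
    ext i j
    fin_cases i <;> fin_cases j <;>
      simp [Hmat, Matrix.mul_apply, Fin.sum_univ_two, -mul_eq_zero] <;>
      (first
        | ring1
        | linear_combination (a*(1 - q*r + p*t)/2) * hdet
        | linear_combination (-(a*(1 - q*r + p*t)/2)) * hdet
        | linear_combination (b*(1 - q*r + p*t)/2) * hdet
        | linear_combination (-(b*(1 - q*r + p*t)/2)) * hdet
        | linear_combination (c*(1 - q*r + p*t)/2) * hdet
        | linear_combination (-(c*(1 - q*r + p*t)/2)) * hdet)
  · rintro ⟨x, hx, rfl⟩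
    rw [Matrix.trace_fin_two] at hx
    obtain ⟨a, b, c, rfl⟩ : ∃ a b c, x = !![a, b; c, -a] := by
      refine ⟨x 0 0, x 0 1, x 1 0, ?_⟩
      have h11 : x 1 1 = -x 0 0 := by linarith
      conv_lhs => rw [Matrix.eta_fin_two x]
      rw [h11]
    refine ⟨!![(a*(p-t) - r*b - q*c)/(p-t), (2*q*a + 2*p*b)/(p-t);
              (2*r*a - 2*t*c)/(p-t), -((a*(p-t) - r*b - q*c)/(p-t))],
           by simp [Matrix.trace_fin_two] <;> ring, ?_⟩
    simp only [Pbiv]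
    rw [hconj, hsinv]
    ext i j
    fin_cases i <;> fin_cases j <;>
      simp [Hmat, Matrix.mul_apply, Fin.sum_univ_two, -mul_eq_zero] <;>
      (try field_simp) <;>
      (first
        | ring1
        | linear_combination (a*(p-t)) * hdet
        | linear_combination (-(a*(p-t))) * hdet
        | linear_combination (b*(p-t)) * hdet
        | linear_combination (-(b*(p-t))) * hdet
        | linear_combination (c*(p-t)) * hdet
        | linear_combination (-(c*(p-t))) * hdet
        | linear_combination (2*a*(p-t)) * hdet
        | linear_combination (-(2*a*(p-t))) * hdet
        | linear_combination (2*b*(p-t)) * hdet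
        | linear_combination (-(2*b*(p-t))) * hdet
        | linear_combination (2*c*(p-t)) * hdet
        | linear_combination (-(2*c*(p-t))) * hdet
        | linear_combination (a*(p-t)^2) * hdet
        | linear_combination (-(a*(p-t)^2)) * hdet
        | linear_combination (b*(p-t)^2) * hdet
        | linear_combination (-(b*(p-t)^2)) * hdet
        | linear_combination (c*(p-t)^2) * hdet
        | linear_combination (-(c*(p-t)^2)) * hdet
        | linear_combination (2*a*(p-t)^3) * hdet
        | linear_combination (-(2*a*(p-t)^3)) * hdet
        | linear_combination (2*b*(p-t)^3) * hdet
        | linear_combination (-(2*b*(p-t)^3)) * hdet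
        | linear_combination (2*c*(p-t)^3) * hdet
        | linear_combination (-(2*c*(p-t)^3)) * hdet)
end
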